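/- Let η be a sublinear measure of non-compactness on a dual Banach space X*. Then the ω-iterated measure η^ω is also a sublinear measure of non-compactness on X*. -/

import Mathlib

open Filter Topology Set Pointwise

noncomputable section

namespace Szlenk

variable {E : Type*}

/-- The fragment derivation `[η]'_ε(A)` associated to a set function `η`:
the points of `A` all of whose neighborhoods `U` satisfy `η (A ∩ cl U) ≥ ε`. -/
def frag [TopologicalSpace E] (η : Set E → ℝ) (ε : ℝ) (A : Set E) : Set E :=
  {x | x ∈ A ∧ ∀ U ∈ 𝓝 x, ε ≤ η (A ∩ closure U)}

/-- Transfinite iterates `[η]^γ_ε(A)` of the fragment derivation. -/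
def fragIter [TopologicalSpace E] (η : Set E → ℝ) (ε : ℝ) (A : Set E) (γ : Ordinal.{0}) :
    Set E :=
  Ordinal.limitRecOn γ A (fun _ S => frag η ε S)
    (fun γ _ ih => ⋂ β : {β : Ordinal.{0} // β < γ}, ih β.1 β.2)

/-- The `ω`-iterated measure `η^ω (A) = inf {ε > 0 : [η]^ω_ε(A) = ∅}`. -/
def etaOmega [TopologicalSpace E] (η : Set E → ℝ) (A : Set E) : ℝ :=
  sInf {ε : ℝ | 0 < ε ∧ fragIter η ε A Ordinal.omega0 = ∅}

/-- The iterates `η^{ω^n}` (with `η^{ω^0} := η` and `η^{ω^{n+1}} := (η^{ω^n})^ω`). -/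
def omegaPow [TopologicalSpace E] (η : Set E → ℝ) : ℕ → Set E → ℝ
  | 0 => η
  | n + 1 => etaOmega (omegaPow η n)

/-- `η` is a measure of non compactness (with respect to the closed unit ball `ball`):
it is nonnegative, vanishes on singletons, is monotone, satisfies
`η (A ∪ B) = max (η A) (η B)`, and `η (A + l • ball) ≤ η A + l * b` for some `b > 0`.
All conditions are required on (weak*-)compact sets only. -/
structure IsMNCOn [TopologicalSpace E] [AddCommGroup E] [Module ℝ E]
    (ball : Set E) (η : Set E → ℝ) : Prop where
  nonneg : ∀ A : Set E, IsCompact A → 0 ≤ η A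
  singleton : ∀ x : E, η {x} = 0
  mono : ∀ A B : Set E, IsCompact A → IsCompact B → A ⊆ B → η A ≤ η B
  union : ∀ A B : Set E, IsCompact A → IsCompact B → η (A ∪ B) = max (η A) (η B)
  ball_add : ∃ b > 0, ∀ A : Set E, IsCompact A → ∀ l : ℝ, 0 < l →
    η (A + l • ball) ≤ η A + l * b

/-- `η` is a measure of non compactness with the explicit constant `b` in property (iii). -/
structure IsMNCWith [TopologicalSpace E] [AddCommGroup E] [Module ℝ E]
    (ball : Set E) (b : ℝ) (η : Set E → ℝ) : Prop where
  b_pos : 0 < b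
  nonneg : ∀ A : Set E, IsCompact A → 0 ≤ η A
  singleton : ∀ x : E, η {x} = 0
  mono : ∀ A B : Set E, IsCompact A → IsCompact B → A ⊆ B → η A ≤ η B
  union : ∀ A B : Set E, IsCompact A → IsCompact B → η (A ∪ B) = max (η A) (η B)
  ball_add : ∀ A : Set E, IsCompact A → ∀ l : ℝ, 0 < l →
    η (A + l • ball) ≤ η A + l * b

/-- A sublinear measure of non compactness: homogeneous and subadditive. -/
structure IsSublinear [TopologicalSpace E] [AddCommGroup E] [Module ℝ E]
    (η : Set E → ℝ) : Prop where
  homog : ∀ (l : ℝ) (A : Set E), IsCompact A → η (l • A) = |l| * η A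
  subadd : ∀ A B : Set E, IsCompact A → IsCompact B → η (A + B) ≤ η A + η B

variable {X : Type*} [NormedAddCommGroup X] [NormedSpace ℝ X]

/-- The dual norm on `X*` (the dual being equipped with its weak* topology). -/
def dnorm (f : WeakDual ℝ X) : ℝ := ‖WeakDual.toStrongDual f‖

/-- The closed unit ball of `X*`. -/
def dualBall (X : Type*) [NormedAddCommGroup X] [NormedSpace ℝ X] :
    Set (WeakDual ℝ X) := {f | dnorm f ≤ 1}

/-- The slice derivation `⟨η⟩'_ε(A)`: the points of `A` such that every weak*-closed
halfspace containing them meets `A` in a set of `η`-measure at least `ε`. -/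
def sliceD (η : Set (WeakDual ℝ X) → ℝ) (ε : ℝ) (A : Set (WeakDual ℝ X)) :
    Set (WeakDual ℝ X) :=
  {x | x ∈ A ∧ ∀ (f : X) (c : ℝ), c ≤ x f → ε ≤ η (A ∩ {y | c ≤ y f})}

/-- Transfinite iterates `⟨η⟩^γ_ε(A)` of the slice derivation. -/
def sliceIter (η : Set (WeakDual ℝ X) → ℝ) (ε : ℝ) (A : Set (WeakDual ℝ X))
    (γ : Ordinal.{0}) : Set (WeakDual ℝ X) :=
  Ordinal.limitRecOn γ A (fun _ S => sliceD η ε S)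
    (fun γ _ ih => ⋂ β : {β : Ordinal.{0} // β < γ}, ih β.1 β.2)

/-- A weak*-closed halfspace of `X*`. -/
def IsHalfspace (H : Set (WeakDual ℝ X)) : Prop :=
  ∃ (f : X) (c : ℝ), H = {y : WeakDual ℝ X | c ≤ y f}

/-- The Kuratowski measure of non compactness associated to a (dual) norm `Nd`:
the infimum of all `ε > 0` such that `A` can be covered by finitely many balls of
diameter `ε` (i.e. of radius `ε / 2`). -/
def kurN (Nd : WeakDual ℝ X → ℝ) (A : Set (WeakDual ℝ X)) : ℝ :=
  sInf {ε : ℝ | 0 < ε ∧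
    ∃ F : Finset (WeakDual ℝ X), A ⊆ ⋃ c ∈ F, {y | Nd (y - c) ≤ ε / 2}}

/-- The Kuratowski measure of non compactness on `X*`. -/
def kur (A : Set (WeakDual ℝ X)) : ℝ := kurN dnorm A

/-- The iterated sets `A^ε_β` of the convex Szlenk derivation:
`A^ε_{β+1}` is the weak*-closed convex hull of `[σ]'_ε(A^ε_β)`. -/
def convIter (ε : ℝ) (K : Set (WeakDual ℝ X)) (γ : Ordinal.{0}) : Set (WeakDual ℝ X) :=
  Ordinal.limitRecOn γ K (fun _ S => closure (convexHull ℝ (frag kur ε S)))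
    (fun γ _ ih => ⋂ β : {β : Ordinal.{0} // β < γ}, ih β.1 β.2)

/-- The families `𝒯_α` of trees on `ℕ`. A tree is a set of finite sequences of
naturals (closed under initial segments); the root is the empty sequence, and
`(n)⌢s` is represented by `n :: s`. `𝒯_0 = {{∅}}`, and `T ∈ 𝒯_α` for `α ≥ 1` if
`T = {∅} ∪ ⋃_k (n_k)⌢T_k` with `n_k` strictly increasing, `T_k ∈ 𝒯_{α_k}`, where
`α_k = β` for all `k` if `α = β + 1`, and `α_k ↗ α` if `α` is a limit ordinal. -/
inductive IsTreeFam : Ordinal.{0} → Set (List ℕ) → Prop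
  | zero : IsTreeFam 0 {[]}
  | node {α : Ordinal.{0}} (nk : ℕ → ℕ) (αk : ℕ → Ordinal.{0}) (Tk : ℕ → Set (List ℕ))
      (hnk : StrictMono nk) (hTk : ∀ k, IsTreeFam (αk k) (Tk k))
      (hα : (∃ β, α = β + 1 ∧ ∀ k, αk k = β) ∨
            (Order.IsSuccLimit α ∧ StrictMono αk ∧ α = ⨆ k, αk k)) :
      IsTreeFam α ({[]} ∪ ⋃ k, (List.cons (nk k)) '' Tk k)

/-- A family `(x_s)_{s ∈ T}` is weak*-continuous: `x_{s⌢n} → x_s` (in the ambient,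
i.e. weak*, topology) along the children of every node `s` of `T`. -/
def IsContFam [TopologicalSpace E] (T : Set (List ℕ)) (x : List ℕ → E) : Prop :=
  ∀ s ∈ T, Tendsto (fun n : ℕ => x (s ++ [n]))
    (atTop ⊓ 𝓟 {n : ℕ | s ++ [n] ∈ T}) (𝓝 (x s))

/-- A family `(x_s)_{s ∈ T}` in `X*` is `ε`-separated: `‖x_s - x_{s⌢n}‖ ≥ ε`. -/
def IsSepFam (ε : ℝ) (T : Set (List ℕ)) (x : List ℕ → WeakDual ℝ X) : Prop :=
  ∀ s ∈ T, ∀ n : ℕ, s ++ [n] ∈ T → ε ≤ dnorm (x s - x (s ++ [n]))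

/-- Norm distance from a point of `X*` to a subset of `X*`. -/
def ddist (f : WeakDual ℝ X) (A : Set (WeakDual ℝ X)) : ℝ :=
  sInf ((fun g => dnorm (f - g)) '' A)

/-- The product `η₁ × η₂` of two measures of non compactness. -/
def prodMNC {X₁ X₂ : Type*} [NormedAddCommGroup X₁] [NormedSpace ℝ X₁]
    [NormedAddCommGroup X₂] [NormedSpace ℝ X₂]
    (η₁ : Set (WeakDual ℝ X₁) → ℝ) (η₂ : Set (WeakDual ℝ X₂) → ℝ)
    (A : Set (WeakDual ℝ X₁ × WeakDual ℝ X₂)) : ℝ :=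
  sInf {ε : ℝ | 0 < ε ∧ ∃ (n : ℕ) (A₁ : Fin n → Set (WeakDual ℝ X₁))
      (A₂ : Fin n → Set (WeakDual ℝ X₂)),
      (∀ i, IsCompact (A₁ i) ∧ IsCompact (A₂ i) ∧ η₁ (A₁ i) < ε ∧ η₂ (A₂ i) < ε) ∧
      A ⊆ ⋃ i, A₁ i ×ˢ A₂ i}

/-- The dual norm on `X*` associated to an (equivalent) norm `N` on `X`. -/
def dualNormOf (N : X → ℝ) (f : WeakDual ℝ X) : ℝ :=
  sSup ((fun x => f x) '' {x : X | N x ≤ 1})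

/-- The closed unit ball of the dual norm associated to a norm `N` on `X`. -/
def dualBallOf (N : X → ℝ) : Set (WeakDual ℝ X) :=
  {f : WeakDual ℝ X | ∀ x : X, |f x| ≤ N x}

set_option linter.unusedSectionVars false

/-! ### Auxiliary lemmas for the fragment derivation -/

section FragBasic

variable {E : Type*} [TopologicalSpace E] {η : Set E → ℝ} {ε ε' δ : ℝ} {A B : Set E}

theorem mem_frag {x : E} :
    x ∈ frag η ε A ↔ x ∈ A ∧ ∀ U ∈ 𝓝 x, ε ≤ η (A ∩ closure U) := Iff.rfl

theorem frag_subset (η : Set E → ℝ) (ε : ℝ) (A : Set E) : frag η ε A ⊆ A := fun _ h => h.1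

theorem fragIter_zero (η : Set E → ℝ) (ε : ℝ) (A : Set E) : fragIter η ε A 0 = A :=
  Ordinal.limitRecOn_zero ..

theorem fragIter_succ (η : Set E → ℝ) (ε : ℝ) (A : Set E) (γ : Ordinal.{0}) :
    fragIter η ε A (Order.succ γ) = frag η ε (fragIter η ε A γ) :=
  Ordinal.limitRecOn_succ ..

theorem fragIter_limit (η : Set E → ℝ) (ε : ℝ) (A : Set E) {γ : Ordinal.{0}}
    (hγ : Order.IsSuccLimit γ) :
    fragIter η ε A γ = ⋂ β : {β : Ordinal.{0} // β < γ}, fragIter η ε A β.1 :=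
  Ordinal.limitRecOn_limit _ _ _ _ hγ

theorem fragIter_natSucc (η : Set E → ℝ) (ε : ℝ) (A : Set E) (n : ℕ) :
    fragIter η ε A (↑(n + 1)) = frag η ε (fragIter η ε A ↑n) := by
  rw [Nat.cast_succ, Ordinal.add_one_eq_succ, fragIter_succ]

theorem fragIter_anti (η : Set E → ℝ) (ε : ℝ) (A : Set E) :
    ∀ {γ β : Ordinal.{0}}, β ≤ γ → fragIter η ε A γ ⊆ fragIter η ε A β := by
  intro γ
  induction γ using Ordinal.induction with
  | h γ IH =>
    intro β hβ
    rcases eq_or_lt_of_le hβ with rfl | hβ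
    · exact subset_rfl
    rcases Ordinal.zero_or_succ_or_isSuccLimit γ with rfl | ⟨δ, rfl⟩ | hγ
    · exact absurd hβ (not_lt_of_ge (zero_le (a := β)))
    · rw [fragIter_succ]
      exact (frag_subset _ _ _).trans (IH δ (Order.lt_succ δ) (Order.lt_succ_iff.1 hβ))
    · rw [fragIter_limit η ε A hγ]
      exact iInter_subset (fun β : {β : Ordinal.{0} // β < γ} => fragIter η ε A β.1) ⟨β, hβ⟩

theorem fragIter_subset_self (η : Set E → ℝ) (ε : ℝ) (A : Set E) (γ : Ordinal.{0}) :
    fragIter η ε A γ ⊆ A := by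
  have := fragIter_anti η ε A (zero_le (a := γ))
  rwa [fragIter_zero] at this

theorem isClosed_frag [T2Space E]
    (hmono : ∀ A B : Set E, IsCompact A → IsCompact B → A ⊆ B → η A ≤ η B)
    (hA : IsCompact A) : IsClosed (frag η ε A) := by
  have heq : frag η ε A = A ∩ (⋃₀ {U : Set E | IsOpen U ∧ η (A ∩ closure U) < ε})ᶜ := by
    ext x
    simp only [mem_inter_iff, mem_compl_iff, mem_sUnion, mem_setOf_eq, mem_frag, not_exists]
    constructor
    · rintro ⟨hxA, hx⟩
      refine ⟨hxA, ?_⟩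
      rintro U ⟨⟨hUo, hUη⟩, hxU⟩
      exact absurd (hx U (hUo.mem_nhds hxU)) (not_le.2 hUη)
    · rintro ⟨hxA, hx⟩
      refine ⟨hxA, fun U hU => ?_⟩
      by_contra hlt
      have h1 : η (A ∩ closure (interior U)) < ε :=
        lt_of_le_of_lt
          (hmono _ _ (hA.inter_right isClosed_closure) (hA.inter_right isClosed_closure)
            (inter_subset_inter_right A (closure_mono interior_subset)))
          (not_le.1 hlt)
      exact hx (interior U) ⟨⟨isOpen_interior, h1⟩, mem_interior_iff_mem_nhds.2 hU⟩
  rw [heq]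
  exact hA.isClosed.inter (isOpen_sUnion fun U hU => hU.1).isClosed_compl

theorem isCompact_frag [T2Space E]
    (hmono : ∀ A B : Set E, IsCompact A → IsCompact B → A ⊆ B → η A ≤ η B)
    (hA : IsCompact A) : IsCompact (frag η ε A) :=
  hA.of_isClosed_subset (isClosed_frag hmono hA) (frag_subset _ _ _)

theorem isCompact_fragIter [T2Space E]
    (hmono : ∀ A B : Set E, IsCompact A → IsCompact B → A ⊆ B → η A ≤ η B)
    (hA : IsCompact A) (γ : Ordinal.{0}) : IsCompact (fragIter η ε A γ) := by
  induction γ using Ordinal.induction with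
  | h γ IH =>
    rcases Ordinal.zero_or_succ_or_isSuccLimit γ with rfl | ⟨δ, rfl⟩ | hγ
    · rw [fragIter_zero]; exact hA
    · rw [fragIter_succ]; exact isCompact_frag hmono (IH δ (Order.lt_succ δ))
    · rw [fragIter_limit η ε A hγ]
      refine hA.of_isClosed_subset (isClosed_iInter fun β => (IH β.1 β.2).isClosed) ?_
      have h0 := iInter_subset (fun β : {β : Ordinal.{0} // β < γ} => fragIter η ε A β.1)
        ⟨0, hγ.pos⟩
      rwa [fragIter_zero] at h0

theorem frag_mono
    (hmono : ∀ A B : Set E, IsCompact A → IsCompact B → A ⊆ B → η A ≤ η B)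
    (hA : IsCompact A) (hB : IsCompact B) (hAB : A ⊆ B) (hε : ε ≤ ε') :
    frag η ε' A ⊆ frag η ε B := by
  rintro x ⟨hxA, hx⟩
  refine ⟨hAB hxA, fun U hU => ?_⟩
  refine le_trans hε ((hx U hU).trans (hmono _ _ (hA.inter_right isClosed_closure)
    (hB.inter_right isClosed_closure) (inter_subset_inter_left _ hAB)))

theorem fragIter_mono [T2Space E]
    (hmono : ∀ A B : Set E, IsCompact A → IsCompact B → A ⊆ B → η A ≤ η B)
    (hA : IsCompact A) (hB : IsCompact B) (hAB : A ⊆ B) (hε : ε ≤ ε') (γ : Ordinal.{0}) :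
    fragIter η ε' A γ ⊆ fragIter η ε B γ := by
  induction γ using Ordinal.induction with
  | h γ IH =>
    rcases Ordinal.zero_or_succ_or_isSuccLimit γ with rfl | ⟨δ, rfl⟩ | hγ
    · rw [fragIter_zero, fragIter_zero]; exact hAB
    · rw [fragIter_succ, fragIter_succ]
      exact frag_mono hmono (isCompact_fragIter hmono hA δ) (isCompact_fragIter hmono hB δ)
        (IH δ (Order.lt_succ δ)) hε
    · rw [fragIter_limit η ε' A hγ, fragIter_limit η ε B hγ]
      exact iInter_mono fun β => IH β.1 β.2

end FragBasic

section FragUnion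

variable {E : Type*} [TopologicalSpace E] [T2Space E] [RegularSpace E]
  {η : Set E → ℝ} {ε ε' δ : ℝ} {A B : Set E}

theorem frag_union_aux
    (hmono : ∀ A B : Set E, IsCompact A → IsCompact B → A ⊆ B → η A ≤ η B)
    (hA : IsCompact A) (hB : IsCompact B) {x : E}
    (hx : x ∈ frag η ε (A ∪ B)) (hxA : x ∈ A) (hxB : x ∉ B) : x ∈ frag η ε A := by
  obtain ⟨V, hV, hVc, hVB⟩ :=
    exists_mem_nhds_isClosed_subset (hB.isClosed.isOpen_compl.mem_nhds hxB)
  refine ⟨hxA, fun U hU => ?_⟩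
  have h1 := hx.2 (U ∩ V) (inter_mem hU hV)
  have hcl : closure (U ∩ V) ⊆ Bᶜ := by
    refine (closure_mono inter_subset_right).trans ?_
    rw [hVc.closure_eq]; exact hVB
  have h2 : (A ∪ B) ∩ closure (U ∩ V) = A ∩ closure (U ∩ V) := by
    ext y
    constructor
    · rintro ⟨hy1 | hy1, hy2⟩
      · exact ⟨hy1, hy2⟩
      · exact absurd hy1 (hcl hy2)
    · rintro ⟨hy1, hy2⟩; exact ⟨Or.inl hy1, hy2⟩
  rw [h2] at h1
  exact h1.trans (hmono _ _ (hA.inter_right isClosed_closure)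
    (hA.inter_right isClosed_closure)
    (inter_subset_inter_right _ (closure_mono inter_subset_left)))

theorem frag_union
    (hmono : ∀ A B : Set E, IsCompact A → IsCompact B → A ⊆ B → η A ≤ η B)
    (hunion : ∀ A B : Set E, IsCompact A → IsCompact B → η (A ∪ B) = max (η A) (η B))
    (hA : IsCompact A) (hB : IsCompact B) :
    frag η ε (A ∪ B) ⊆ frag η ε A ∪ frag η ε B := by
  intro x hx
  by_cases hxA : x ∈ A <;> by_cases hxB : x ∈ B
  · by_contra hcon
    obtain ⟨h1, h2⟩ := not_or.1 hcon
    have ha : ∃ U ∈ 𝓝 x, η (A ∩ closure U) < ε := by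
      by_contra h; push_neg at h; exact h1 ⟨hxA, fun U hU => h U hU⟩
    have hb : ∃ U ∈ 𝓝 x, η (B ∩ closure U) < ε := by
      by_contra h; push_neg at h; exact h2 ⟨hxB, fun U hU => h U hU⟩
    obtain ⟨U₁, hU₁, hη₁⟩ := ha
    obtain ⟨U₂, hU₂, hη₂⟩ := hb
    have h12 := hx.2 (U₁ ∩ U₂) (inter_mem hU₁ hU₂)
    rw [union_inter_distrib_right,
      hunion _ _ (hA.inter_right isClosed_closure) (hB.inter_right isClosed_closure)] at h12
    have hle1 : η (A ∩ closure (U₁ ∩ U₂)) ≤ η (A ∩ closure U₁) :=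
      hmono _ _ (hA.inter_right isClosed_closure) (hA.inter_right isClosed_closure)
        (inter_subset_inter_right _ (closure_mono inter_subset_left))
    have hle2 : η (B ∩ closure (U₁ ∩ U₂)) ≤ η (B ∩ closure U₂) :=
      hmono _ _ (hB.inter_right isClosed_closure) (hB.inter_right isClosed_closure)
        (inter_subset_inter_right _ (closure_mono inter_subset_right))
    rcases max_cases (η (A ∩ closure (U₁ ∩ U₂))) (η (B ∩ closure (U₁ ∩ U₂))) with
      ⟨hm, _⟩ | ⟨hm, _⟩ <;> rw [hm] at h12 <;> linarith
  · exact Or.inl (frag_union_aux hmono hA hB hx hxA hxB)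
  · refine Or.inr (frag_union_aux hmono hB hA ?_ hxB hxA)
    rwa [union_comm] at hx
  · exact absurd hx.1 (by simp [hxA, hxB])

theorem fragIter_union
    (hmono : ∀ A B : Set E, IsCompact A → IsCompact B → A ⊆ B → η A ≤ η B)
    (hunion : ∀ A B : Set E, IsCompact A → IsCompact B → η (A ∪ B) = max (η A) (η B))
    (hA : IsCompact A) (hB : IsCompact B) (γ : Ordinal.{0}) :
    fragIter η ε (A ∪ B) γ ⊆ fragIter η ε A γ ∪ fragIter η ε B γ := by
  induction γ using Ordinal.induction with
  | h γ IH =>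
    rcases Ordinal.zero_or_succ_or_isSuccLimit γ with rfl | ⟨δ, rfl⟩ | hγ
    · rw [fragIter_zero, fragIter_zero, fragIter_zero]
    · rw [fragIter_succ, fragIter_succ, fragIter_succ]
      refine subset_trans (frag_mono hmono (isCompact_fragIter hmono (hA.union hB) δ)
        ((isCompact_fragIter hmono hA δ).union (isCompact_fragIter hmono hB δ))
        (IH δ (Order.lt_succ δ)) le_rfl) ?_
      exact frag_union hmono hunion (isCompact_fragIter hmono hA δ)
        (isCompact_fragIter hmono hB δ)
    · rw [fragIter_limit η ε (A ∪ B) hγ, fragIter_limit η ε A hγ, fragIter_limit η ε B hγ]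
      intro x hx
      by_cases hxA : x ∈ ⋂ β : {β : Ordinal.{0} // β < γ}, fragIter η ε A β.1
      · exact Or.inl hxA
      · simp only [mem_iInter, not_forall] at hxA
        obtain ⟨β₀, hβ₀⟩ := hxA
        refine Or.inr (mem_iInter.2 fun β => ?_)
        rcases le_total β.1 β₀.1 with h | h
        · rcases IH β₀.1 β₀.2 (mem_iInter.1 hx β₀) with h' | h'
          · exact absurd h' hβ₀
          · exact fragIter_anti η ε B h h'
        · rcases IH β.1 β.2 (mem_iInter.1 hx β) with h' | h'
          · exact absurd (fragIter_anti η ε A h h') hβ₀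
          · exact h'

theorem frag_biUnion {ι : Type*}
    (hmono : ∀ A B : Set E, IsCompact A → IsCompact B → A ⊆ B → η A ≤ η B)
    (hunion : ∀ A B : Set E, IsCompact A → IsCompact B → η (A ∪ B) = max (η A) (η B))
    (t : Finset ι) (C : ι → Set E) (hC : ∀ i ∈ t, IsCompact (C i)) :
    frag η ε (⋃ i ∈ t, C i) ⊆ ⋃ i ∈ t, frag η ε (C i) := by
  classical
  induction t using Finset.induction with
  | empty => simpa using frag_subset η ε ∅
  | @insert a s hat IH =>
    have hCs : IsCompact (⋃ i ∈ s, C i) :=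
      s.finite_toSet.isCompact_biUnion fun i hi => hC i (Finset.mem_insert_of_mem hi)
    have hCa : IsCompact (C a) := hC a (Finset.mem_insert_self a s)
    have hrw : (⋃ i ∈ insert a s, C i) = C a ∪ ⋃ i ∈ s, C i := by
      simp [Finset.set_biUnion_insert]
    rw [hrw]
    refine (frag_union hmono hunion hCa hCs).trans ?_
    intro x hx
    rcases hx with hx | hx
    · exact mem_biUnion (Finset.mem_insert_self a s) hx
    · obtain ⟨i, hi, hxi⟩ := mem_iUnion₂.1 (IH (fun i hi => hC i (Finset.mem_insert_of_mem hi)) hx)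
      exact mem_biUnion (Finset.mem_insert_of_mem hi) hxi

theorem eta_biUnion_lt {ι : Type*} {c : ℝ}
    (hunion : ∀ A B : Set E, IsCompact A → IsCompact B → η (A ∪ B) = max (η A) (η B))
    (hempty : η (∅ : Set E) = 0)
    (t : Finset ι) (K : ι → Set E) (hK : ∀ i ∈ t, IsCompact (K i))
    (hlt : ∀ i ∈ t, η (K i) < c) (hc : 0 < c) : η (⋃ i ∈ t, K i) < c := by
  classical
  induction t using Finset.induction with
  | empty => simpa [hempty] using hc
  | @insert a s hat IH =>
    have hKs : IsCompact (⋃ i ∈ s, K i) :=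
      s.finite_toSet.isCompact_biUnion fun i hi => hK i (Finset.mem_insert_of_mem hi)
    have hrw : (⋃ i ∈ insert a s, K i) = K a ∪ ⋃ i ∈ s, K i := by
      simp [Finset.set_biUnion_insert]
    rw [hrw, hunion _ _ (hK a (Finset.mem_insert_self a s)) hKs]
    exact max_lt (hlt a (Finset.mem_insert_self a s))
      (IH (fun i hi => hK i (Finset.mem_insert_of_mem hi))
        (fun i hi => hlt i (Finset.mem_insert_of_mem hi)))

end FragUnion

section FragAdd

variable {E : Type*} [TopologicalSpace E] [T2Space E] [RegularSpace E]
  [AddCommGroup E] [Module ℝ E] [ContinuousAdd E]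
  {η : Set E → ℝ} {ε ε' δ : ℝ} {A B : Set E}

theorem frag_add
    (hmono : ∀ A B : Set E, IsCompact A → IsCompact B → A ⊆ B → η A ≤ η B)
    (hunion : ∀ A B : Set E, IsCompact A → IsCompact B → η (A ∪ B) = max (η A) (η B))
    (hsubadd : ∀ A B : Set E, IsCompact A → IsCompact B → η (A + B) ≤ η A + η B)
    (hempty : η (∅ : Set E) = 0)
    (hεδ : 0 < ε + δ) (hA : IsCompact A) (hB : IsCompact B) :
    frag η (ε + δ) (A + B) ⊆ (frag η ε A + B) ∪ (A + frag η δ B) := by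
  intro x hx
  by_contra hcon
  obtain ⟨h1, h2⟩ := not_or.1 hcon
  -- the set of decompositions of x
  set D : Set (E × E) := (A ×ˢ B) ∩ ((fun p : E × E => p.1 + p.2) ⁻¹' {x}) with hDdef
  have hcont : Continuous (fun p : E × E => p.1 + p.2) := continuous_fst.add continuous_snd
  have hDcomp : IsCompact D := (hA.prod hB).inter_right (isClosed_singleton.preimage hcont)
  -- choose neighborhoods for every decomposition
  have hUV : ∀ p ∈ D, ∃ U V : Set E, IsOpen U ∧ IsOpen V ∧ p.1 ∈ U ∧ p.2 ∈ V ∧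
      η (A ∩ closure U) < ε ∧ η (B ∩ closure V) < δ := by
    rintro ⟨a, b⟩ ⟨⟨haA, hbB⟩, hab⟩
    have hab' : a + b = x := hab
    have ha : a ∉ frag η ε A := fun hf => h1 (Set.mem_add.2 ⟨a, hf, b, hbB, hab'⟩)
    have hb : b ∉ frag η δ B := fun hf => h2 (Set.mem_add.2 ⟨a, haA, b, hf, hab'⟩)
    have ha' : ∃ U ∈ 𝓝 a, η (A ∩ closure U) < ε := by
      by_contra h; push_neg at h; exact ha ⟨haA, fun U hU => h U hU⟩
    have hb' : ∃ V ∈ 𝓝 b, η (B ∩ closure V) < δ := by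
      by_contra h; push_neg at h; exact hb ⟨hbB, fun V hV => h V hV⟩
    obtain ⟨U₀, hU₀, hU₀η⟩ := ha'
    obtain ⟨V₀, hV₀, hV₀η⟩ := hb'
    refine ⟨interior U₀, interior V₀, isOpen_interior, isOpen_interior,
      mem_interior_iff_mem_nhds.2 hU₀, mem_interior_iff_mem_nhds.2 hV₀,
      lt_of_le_of_lt (hmono _ _ (hA.inter_right isClosed_closure)
        (hA.inter_right isClosed_closure)
        (inter_subset_inter_right _ (closure_mono interior_subset))) hU₀η,
      lt_of_le_of_lt (hmono _ _ (hB.inter_right isClosed_closure)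
        (hB.inter_right isClosed_closure)
        (inter_subset_inter_right _ (closure_mono interior_subset))) hV₀η⟩
  choose! U V hUo hVo haU hbV hUη hVη using hUV
  -- finite subcover of D
  have hcover : D ⊆ ⋃ p ∈ D, U p ×ˢ V p := fun p hp =>
    mem_biUnion hp ⟨haU p hp, hbV p hp⟩
  obtain ⟨t, htD, htfin, htcover⟩ :=
    hDcomp.elim_finite_subcover_image (fun p hp => (hUo p hp).prod (hVo p hp)) hcover
  -- the compact set of "bad" decompositions
  set O : Set (E × E) := ⋃ p ∈ t, U p ×ˢ V p with hOdef
  have hOopen : IsOpen O :=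
    isOpen_biUnion fun p hp => ((hUo p (htD hp)).prod (hVo p (htD hp)))
  set C : Set (E × E) := (A ×ˢ B) \ O with hCdef
  have hCcomp : IsCompact C := (hA.prod hB).diff hOopen
  have hScomp : IsCompact ((fun p : E × E => p.1 + p.2) '' C) := hCcomp.image hcont
  have hxS : x ∉ (fun p : E × E => p.1 + p.2) '' C := by
    rintro ⟨p, hpC, hpx⟩
    exact hpC.2 (htcover ⟨hpC.1, hpx⟩)
  obtain ⟨W, hW, hWc, hWS⟩ :=
    exists_mem_nhds_isClosed_subset (hScomp.isClosed.isOpen_compl.mem_nhds hxS)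
  have h3 := hx.2 W hW
  -- the covering of (A+B) ∩ closure W
  have hsub : (A + B) ∩ closure W ⊆ ⋃ p ∈ t, (A ∩ closure (U p)) + (B ∩ closure (V p)) := by
    rintro y ⟨hy, hyW⟩
    rw [hWc.closure_eq] at hyW
    obtain ⟨a, haA, b, hbB, rfl⟩ := Set.mem_add.1 hy
    have hC : (a, b) ∉ C := fun hC => (hWS hyW) ⟨(a, b), hC, rfl⟩
    have hO : (a, b) ∈ O := by
      by_contra hO; exact hC ⟨⟨haA, hbB⟩, hO⟩
    obtain ⟨p, hpt, hpU⟩ := mem_iUnion₂.1 hO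
    exact mem_biUnion hpt
      (Set.mem_add.2 ⟨a, ⟨haA, subset_closure hpU.1⟩, b, ⟨hbB, subset_closure hpU.2⟩, rfl⟩)
  have hKcomp : ∀ p ∈ t, IsCompact ((A ∩ closure (U p)) + (B ∩ closure (V p))) := fun p _ =>
    (hA.inter_right isClosed_closure).add (hB.inter_right isClosed_closure)
  have htfin' := htfin
  have h4 : η ((A + B) ∩ closure W) ≤
      η (⋃ p ∈ htfin.toFinset, (A ∩ closure (U p)) + (B ∩ closure (V p))) := by
    refine hmono _ _ ((hA.add hB).inter_right isClosed_closure)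
      (htfin.toFinset.finite_toSet.isCompact_biUnion fun p hp =>
        hKcomp p (htfin.mem_toFinset.1 hp)) ?_
    refine hsub.trans ?_
    intro y hy
    obtain ⟨p, hpt, hyp⟩ := mem_iUnion₂.1 hy
    exact mem_biUnion (htfin.mem_toFinset.2 hpt) hyp
  have h5 : η (⋃ p ∈ htfin.toFinset, (A ∩ closure (U p)) + (B ∩ closure (V p))) < ε + δ := by
    refine eta_biUnion_lt hunion hempty _ _
      (fun p hp => hKcomp p (htfin.mem_toFinset.1 hp)) (fun p hp => ?_) hεδ
    have hpt := htfin.mem_toFinset.1 hp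
    have hpD := htD hpt
    calc η ((A ∩ closure (U p)) + (B ∩ closure (V p)))
        ≤ η (A ∩ closure (U p)) + η (B ∩ closure (V p)) :=
          hsubadd _ _ (hA.inter_right isClosed_closure) (hB.inter_right isClosed_closure)
      _ < ε + δ := add_lt_add (hUη p hpD) (hVη p hpD)
  linarith

theorem fragIter_add
    (hmono : ∀ A B : Set E, IsCompact A → IsCompact B → A ⊆ B → η A ≤ η B)
    (hunion : ∀ A B : Set E, IsCompact A → IsCompact B → η (A ∪ B) = max (η A) (η B))
    (hsubadd : ∀ A B : Set E, IsCompact A → IsCompact B → η (A + B) ≤ η A + η B)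
    (hempty : η (∅ : Set E) = 0)
    (hε : 0 < ε) (hδ : 0 < δ) (hA : IsCompact A) (hB : IsCompact B) (n : ℕ) :
    fragIter η (ε + δ) (A + B) ↑n ⊆
      ⋃ i ∈ Finset.range (n + 1), (fragIter η ε A ↑i + fragIter η δ B ↑(n - i)) := by
  induction n with
  | zero =>
    rw [Nat.cast_zero, fragIter_zero]
    intro y hy
    refine mem_biUnion (Finset.mem_range.2 Nat.zero_lt_one) ?_
    simpa [fragIter_zero] using hy
  | succ n IH =>
    have hScomp : ∀ i : ℕ, IsCompact (fragIter η ε A (↑i : Ordinal.{0})) := fun i =>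
      isCompact_fragIter hmono hA _
    have hTcomp : ∀ i : ℕ, IsCompact (fragIter η δ B (↑i : Ordinal.{0})) := fun i =>
      isCompact_fragIter hmono hB _
    have hKcomp : ∀ i ∈ Finset.range (n + 1),
        IsCompact (fragIter η ε A (↑i : Ordinal.{0}) + fragIter η δ B (↑(n - i) : Ordinal.{0})) :=
      fun i _ => (hScomp i).add (hTcomp (n - i))
    rw [fragIter_natSucc]
    refine subset_trans (frag_mono hmono (isCompact_fragIter hmono (hA.add hB) _)
      ((Finset.range (n+1)).finite_toSet.isCompact_biUnion hKcomp) IH le_rfl) ?_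
    refine subset_trans (frag_biUnion hmono hunion _ _ hKcomp) ?_
    intro y hy
    obtain ⟨i, hi, hyi⟩ := mem_iUnion₂.1 hy
    have hi' : i ≤ n := Nat.lt_succ_iff.1 (Finset.mem_range.1 hi)
    have hstep := frag_add (ε := ε) (δ := δ) hmono hunion hsubadd hempty (by linarith) (hScomp i) (hTcomp (n - i))
    rcases hstep hyi with hy' | hy'
    · refine mem_iUnion₂.2 ⟨i + 1, Finset.mem_range.2 (by omega), ?_⟩
      rw [fragIter_natSucc] at *
      have : n + 1 - (i + 1) = n - i := by omega
      rw [this]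
      exact hy'
    · refine mem_iUnion₂.2 ⟨i, Finset.mem_range.2 (by omega), ?_⟩
      have : n + 1 - i = (n - i) + 1 := by omega
      rw [this, fragIter_natSucc]
      exact hy'

theorem fragIter_add_empty
    (hmono : ∀ A B : Set E, IsCompact A → IsCompact B → A ⊆ B → η A ≤ η B)
    (hunion : ∀ A B : Set E, IsCompact A → IsCompact B → η (A ∪ B) = max (η A) (η B))
    (hsubadd : ∀ A B : Set E, IsCompact A → IsCompact B → η (A + B) ≤ η A + η B)
    (hempty : η (∅ : Set E) = 0)
    (hε : 0 < ε) (hδ : 0 < δ) (hA : IsCompact A) (hB : IsCompact B) {n m : ℕ}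
    (hn : fragIter η ε A ↑n = ∅) (hm : fragIter η δ B ↑m = ∅) :
    fragIter η (ε + δ) (A + B) ↑(n + m) = ∅ := by
  refine eq_empty_of_subset_empty ?_
  refine (fragIter_add hmono hunion hsubadd hempty hε hδ hA hB (n + m)).trans ?_
  intro y hy
  obtain ⟨i, hi, hyi⟩ := mem_iUnion₂.1 hy
  rcases le_or_gt n i with h | h
  · have : fragIter η ε A (↑i : Ordinal.{0}) = ∅ :=
      eq_empty_of_subset_empty (hn ▸ fragIter_anti η ε A (by exact_mod_cast h))
    rw [this, Set.empty_add] at hyi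
    exact hyi
  · have h' : m ≤ n + m - i := by omega
    have : fragIter η δ B (↑(n + m - i) : Ordinal.{0}) = ∅ :=
      eq_empty_of_subset_empty (hm ▸ fragIter_anti η δ B (by exact_mod_cast h'))
    rw [this, Set.add_empty] at hyi
    exact hyi

end FragAdd

section FragOmega

variable {E : Type*} [TopologicalSpace E] {η : Set E → ℝ} {ε ε' δ : ℝ} {A B : Set E}

theorem fragIter_omega (η : Set E → ℝ) (ε : ℝ) (A : Set E) :
    fragIter η ε A Ordinal.omega0 = ⋂ n : ℕ, fragIter η ε A ↑n := by
  rw [fragIter_limit η ε A Ordinal.isSuccLimit_omega0]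
  apply subset_antisymm
  · intro x hx
    exact mem_iInter.2 fun n => mem_iInter.1 hx ⟨↑n, Ordinal.nat_lt_omega0 n⟩
  · intro x hx
    refine mem_iInter.2 fun β => ?_
    obtain ⟨n, hn⟩ := Ordinal.lt_omega0.1 β.2
    rw [show β.1 = (n : Ordinal.{0}) from hn]
    exact mem_iInter.1 hx n

theorem omega_empty_iff_exists_nat [T2Space E]
    (hmono : ∀ A B : Set E, IsCompact A → IsCompact B → A ⊆ B → η A ≤ η B)
    (hA : IsCompact A) :
    fragIter η ε A Ordinal.omega0 = ∅ ↔ ∃ n : ℕ, fragIter η ε A ↑n = ∅ := by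
  constructor
  · intro h
    by_contra hc
    push_neg at hc
    have hne : ∀ n : ℕ, (fragIter η ε A ↑n).Nonempty := hc
    have hnonempty := IsCompact.nonempty_iInter_of_sequence_nonempty_isCompact_isClosed
      (fun n => fragIter η ε A ↑n)
      (fun n => fragIter_anti η ε A (by exact_mod_cast Nat.le_succ n))
      hne
      (by simpa [fragIter_zero] using hA)
      (fun n => (isCompact_fragIter hmono hA _).isClosed)
    rw [← fragIter_omega] at hnonempty
    exact hnonempty.ne_empty h
  · rintro ⟨n, hn⟩
    exact eq_empty_of_subset_empty
      (hn ▸ fragIter_anti η ε A (Ordinal.nat_lt_omega0 n).le)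

theorem frag_empty_of_lt
    (_hmono : ∀ A B : Set E, IsCompact A → IsCompact B → A ⊆ B → η A ≤ η B)
    (_hA : IsCompact A) (h : η A < ε) : frag η ε A = ∅ := by
  refine eq_empty_of_subset_empty fun x hx => ?_
  have := hx.2 univ univ_mem
  rw [closure_univ, inter_univ] at this
  exact absurd this (not_le.2 h)

theorem omega_empty_of_lt
    (hmono : ∀ A B : Set E, IsCompact A → IsCompact B → A ⊆ B → η A ≤ η B)
    (hA : IsCompact A) (h : η A < ε) : fragIter η ε A Ordinal.omega0 = ∅ := by
  have h1 : fragIter η ε A 1 = ∅ := by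
    rw [show (1 : Ordinal.{0}) = Order.succ 0 from (Ordinal.add_one_eq_succ 0) ▸
      (zero_add 1).symm, fragIter_succ, fragIter_zero]
    exact frag_empty_of_lt hmono hA h
  exact eq_empty_of_subset_empty (h1 ▸ fragIter_anti η ε A Ordinal.one_lt_omega0.le)

theorem etaOmega_nonneg (η : Set E → ℝ) (A : Set E) : 0 ≤ etaOmega η A :=
  Real.sInf_nonneg fun _ hx => hx.1.le

theorem etaOmega_le (hε : 0 < ε) (h : fragIter η ε A Ordinal.omega0 = ∅) :
    etaOmega η A ≤ ε :=
  csInf_le ⟨0, fun _ hx => hx.1.le⟩ ⟨hε, h⟩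

theorem etaOmega_le_eta
    (hmono : ∀ A B : Set E, IsCompact A → IsCompact B → A ⊆ B → η A ≤ η B)
    (hnonneg : ∀ A : Set E, IsCompact A → 0 ≤ η A)
    (hA : IsCompact A) : etaOmega η A ≤ η A := by
  have h0 : 0 ≤ η A := hnonneg A hA
  refine le_of_forall_pos_le_add fun t ht => ?_
  exact etaOmega_le (by linarith) (omega_empty_of_lt hmono hA (by linarith))

theorem setOf_nonempty
    (hmono : ∀ A B : Set E, IsCompact A → IsCompact B → A ⊆ B → η A ≤ η B)
    (hnonneg : ∀ A : Set E, IsCompact A → 0 ≤ η A)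
    (hA : IsCompact A) :
    {ε : ℝ | 0 < ε ∧ fragIter η ε A Ordinal.omega0 = ∅}.Nonempty :=
  ⟨η A + 1, by have := hnonneg A hA; linarith,
    omega_empty_of_lt hmono hA (lt_add_one _)⟩

theorem omega_empty_of_gt [T2Space E]
    (hmono : ∀ A B : Set E, IsCompact A → IsCompact B → A ⊆ B → η A ≤ η B)
    (hnonneg : ∀ A : Set E, IsCompact A → 0 ≤ η A)
    (hA : IsCompact A) (h : etaOmega η A < ε) : fragIter η ε A Ordinal.omega0 = ∅ := by
  obtain ⟨δ', ⟨hδ'pos, hδ'empty⟩, hδ'lt⟩ :=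
    exists_lt_of_csInf_lt (setOf_nonempty hmono hnonneg hA) h
  exact eq_empty_of_subset_empty
    (hδ'empty ▸ fragIter_mono hmono hA hA subset_rfl hδ'lt.le Ordinal.omega0)

theorem etaOmega_empty (η : Set E → ℝ) : etaOmega η (∅ : Set E) = 0 := by
  have hset : {ε : ℝ | 0 < ε ∧ fragIter η ε (∅ : Set E) Ordinal.omega0 = ∅} = Ioi 0 := by
    ext ε
    simp only [mem_setOf_eq, mem_Ioi, and_iff_left_iff_imp]
    intro _
    have h0 : fragIter η ε (∅ : Set E) Ordinal.omega0 ⊆ fragIter η ε (∅ : Set E) 0 :=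
      fragIter_anti η ε ∅ (zero_le (a := Ordinal.omega0))
    rw [fragIter_zero] at h0
    exact eq_empty_of_subset_empty h0
  rw [etaOmega, hset, csInf_Ioi]

end FragOmega

section FragSmul

variable {E : Type*} [TopologicalSpace E] [AddCommGroup E] [Module ℝ E]
  [ContinuousConstSMul ℝ E] [T2Space E]
  {η : Set E → ℝ} {ε : ℝ} {A : Set E} {l : ℝ}

theorem frag_smul_subset
    (hhomog : ∀ (l : ℝ) (A : Set E), IsCompact A → η (l • A) = |l| * η A)
    (hl : l ≠ 0) (hA : IsCompact A) :
    frag η (|l| * ε) (l • A) ⊆ l • frag η ε A := by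
  rintro x ⟨hxA, hx⟩
  obtain ⟨y, hyA, rfl⟩ := hxA
  refine ⟨y, ⟨hyA, fun U hU => ?_⟩, rfl⟩
  have hU' : l • U ∈ 𝓝 (l • y) := smul_mem_nhds_smul₀ hl hU
  have h2 := hx (l • U) hU'
  rw [closure_smul₀, ← smul_set_inter₀ hl,
    hhomog l _ (hA.inter_right isClosed_closure)] at h2
  exact (mul_le_mul_iff_right₀ (abs_pos.2 hl)).1 h2

theorem frag_smul
    (hhomog : ∀ (l : ℝ) (A : Set E), IsCompact A → η (l • A) = |l| * η A)
    (hl : l ≠ 0) (hA : IsCompact A) :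
    frag η (|l| * ε) (l • A) = l • frag η ε A := by
  refine subset_antisymm (frag_smul_subset hhomog hl hA) ?_
  have h := frag_smul_subset (η := η) (ε := |l| * ε) hhomog
    (inv_ne_zero hl) (hA.smul l)
  rw [inv_smul_smul₀ hl, abs_inv, ← mul_assoc, inv_mul_cancel₀ (abs_ne_zero.2 hl),
    one_mul] at h
  calc l • frag η ε A ⊆ l • l⁻¹ • frag η (|l| * ε) (l • A) :=
        smul_set_mono (by exact h)
    _ = frag η (|l| * ε) (l • A) := smul_inv_smul₀ hl _

theorem fragIter_smul
    (hmono : ∀ A B : Set E, IsCompact A → IsCompact B → A ⊆ B → η A ≤ η B)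
    (hhomog : ∀ (l : ℝ) (A : Set E), IsCompact A → η (l • A) = |l| * η A)
    (hl : l ≠ 0) (hA : IsCompact A) (γ : Ordinal.{0}) :
    fragIter η (|l| * ε) (l • A) γ = l • fragIter η ε A γ := by
  induction γ using Ordinal.induction with
  | h γ IH =>
    rcases Ordinal.zero_or_succ_or_isSuccLimit γ with rfl | ⟨δ, rfl⟩ | hγ
    · rw [fragIter_zero, fragIter_zero]
    · rw [fragIter_succ, fragIter_succ, IH δ (Order.lt_succ δ),
        frag_smul hhomog hl (isCompact_fragIter hmono hA δ)]
    · rw [fragIter_limit η (|l| * ε) (l • A) hγ, fragIter_limit η ε A hγ]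
      calc (⋂ β : {β : Ordinal.{0} // β < γ}, fragIter η (|l| * ε) (l • A) β.1)
          = ⋂ β : {β : Ordinal.{0} // β < γ}, l • fragIter η ε A β.1 :=
            iInter_congr fun β => IH β.1 β.2
        _ = l • ⋂ β : {β : Ordinal.{0} // β < γ}, fragIter η ε A β.1 := by
            simp only [← Set.image_smul]
            exact (image_iInter (MulAction.bijective₀ hl) _).symm

end FragSmul

/-- If `η` is a sublinear measure of non compactness on a dual Banach space `X*`,
then `η^ω` is also a sublinear measure of non compactness on `X*`. -/
theorem etaOmega_sublinear
    {X : Type*} [NormedAddCommGroup X] [NormedSpace ℝ X] [CompleteSpace X]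
    (η : Set (WeakDual ℝ X) → ℝ)
    (hη : IsMNCOn (dualBall X) η) (hsub : IsSublinear η) :
    IsMNCOn (dualBall X) (etaOmega η) ∧ IsSublinear (etaOmega η) := by
  classical
  have hmono := hη.mono
  have hunion := hη.union
  have hnonneg := hη.nonneg
  have hhomog := hsub.homog
  have hsubadd := hsub.subadd
  have hempty : η (∅ : Set (WeakDual ℝ X)) = 0 := by
    refine le_antisymm ?_ (hnonneg ∅ isCompact_empty)
    have h := hmono ∅ {0} isCompact_empty isCompact_singleton (empty_subset _)
    rwa [hη.singleton 0] at h
  have hsingΩ : ∀ x : WeakDual ℝ X, etaOmega η {x} = 0 := by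
    intro x
    have hset : {ε : ℝ | 0 < ε ∧ fragIter η ε {x} Ordinal.omega0 = ∅} = Ioi 0 := by
      ext ε
      simp only [mem_setOf_eq, mem_Ioi, and_iff_left_iff_imp]
      intro hε
      refine omega_empty_of_lt hmono isCompact_singleton ?_
      rw [hη.singleton]; exact hε
    rw [etaOmega, hset, csInf_Ioi]
  have hmonoΩ : ∀ A B : Set (WeakDual ℝ X), IsCompact A → IsCompact B → A ⊆ B →
      etaOmega η A ≤ etaOmega η B := by
    intro A B hA hB hAB
    refine csInf_le_csInf ⟨0, fun x hx => hx.1.le⟩ (setOf_nonempty hmono hnonneg hB) ?_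
    rintro ε ⟨hε, hemp⟩
    exact ⟨hε, eq_empty_of_subset_empty (hemp ▸ fragIter_mono hmono hA hB hAB le_rfl _)⟩
  have hunionΩ : ∀ A B : Set (WeakDual ℝ X), IsCompact A → IsCompact B →
      etaOmega η (A ∪ B) = max (etaOmega η A) (etaOmega η B) := by
    intro A B hA hB
    refine le_antisymm ?_ (max_le (hmonoΩ _ _ hA (hA.union hB) subset_union_left)
      (hmonoΩ _ _ hB (hA.union hB) subset_union_right))
    by_contra hcon
    push_neg at hcon
    obtain ⟨ε, hε1, hε2⟩ := exists_between hcon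
    have hεpos : 0 < ε :=
      lt_of_le_of_lt ((etaOmega_nonneg η A).trans (le_max_left _ _)) hε1
    have hA' := omega_empty_of_gt hmono hnonneg hA ((le_max_left _ _).trans_lt hε1)
    have hB' := omega_empty_of_gt hmono hnonneg hB ((le_max_right _ _).trans_lt hε1)
    have hAB' : fragIter η ε (A ∪ B) Ordinal.omega0 = ∅ := by
      refine eq_empty_of_subset_empty ?_
      refine (fragIter_union hmono hunion hA hB _).trans ?_
      rw [hA', hB', union_empty]
    exact absurd (etaOmega_le hεpos hAB') (not_le.2 hε2)
  have hsubaddΩ : ∀ A B : Set (WeakDual ℝ X), IsCompact A → IsCompact B →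
      etaOmega η (A + B) ≤ etaOmega η A + etaOmega η B := by
    intro A B hA hB
    refine le_of_forall_pos_le_add fun t ht => ?_
    set ε := etaOmega η A + t / 2 with hεdef
    set δ := etaOmega η B + t / 2 with hδdef
    have hεpos : 0 < ε := by
      have := etaOmega_nonneg η A; rw [hεdef]; linarith
    have hδpos : 0 < δ := by
      have := etaOmega_nonneg η B; rw [hδdef]; linarith
    have h1 := omega_empty_of_gt (ε := ε) hmono hnonneg hA (by rw [hεdef]; linarith)
    have h2 := omega_empty_of_gt (ε := δ) hmono hnonneg hB (by rw [hδdef]; linarith)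
    obtain ⟨n, hn⟩ := (omega_empty_iff_exists_nat hmono hA).1 h1
    obtain ⟨m, hm⟩ := (omega_empty_iff_exists_nat hmono hB).1 h2
    have h3 := fragIter_add_empty hmono hunion hsubadd hempty hεpos hδpos hA hB hn hm
    have h4 : fragIter η (ε + δ) (A + B) Ordinal.omega0 = ∅ :=
      eq_empty_of_subset_empty
        (h3 ▸ fragIter_anti η (ε + δ) (A + B) (Ordinal.nat_lt_omega0 _).le)
    have h5 := etaOmega_le (by linarith) h4
    rw [hεdef, hδdef] at h5
    linarith
  have hhomogΩ : ∀ (l : ℝ) (A : Set (WeakDual ℝ X)), IsCompact A →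
      etaOmega η (l • A) = |l| * etaOmega η A := by
    intro l A hA
    rcases eq_or_ne l 0 with rfl | hl
    · rw [abs_zero, zero_mul]
      rcases eq_empty_or_nonempty A with rfl | hne
      · rw [Set.smul_set_empty, etaOmega_empty]
      · rw [zero_smul_set hne, ← Set.singleton_zero]
        exact hsingΩ 0
    · have habs : (0 : ℝ) < |l| := abs_pos.2 hl
      have hset : {ε : ℝ | 0 < ε ∧ fragIter η ε (l • A) Ordinal.omega0 = ∅}
          = |l| • {ε : ℝ | 0 < ε ∧ fragIter η ε A Ordinal.omega0 = ∅} := by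
        ext ε
        constructor
        · rintro ⟨hε, hemp⟩
          refine ⟨ε / |l|, ⟨div_pos hε habs, ?_⟩, ?_⟩
          · have h := fragIter_smul (ε := ε / |l|) hmono hhomog hl hA Ordinal.omega0
            rw [show |l| * (ε / |l|) = ε by field_simp] at h
            rw [h] at hemp
            exact Set.smul_set_eq_empty.1 hemp
          · show |l| • (ε / |l|) = ε
            rw [smul_eq_mul]; field_simp
        · rintro ⟨δ', ⟨hδ'pos, hδ'emp⟩, rfl⟩
          constructor
          · show (0 : ℝ) < |l| • δ'
            rw [smul_eq_mul]; exact mul_pos habs hδ'pos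
          · show fragIter η (|l| • δ') (l • A) Ordinal.omega0 = ∅
            rw [smul_eq_mul, fragIter_smul hmono hhomog hl hA, hδ'emp, Set.smul_set_empty]
      rw [etaOmega, etaOmega, hset, Real.sInf_smul_of_nonneg (abs_nonneg l), smul_eq_mul]
  have hballcomp : IsCompact (dualBall X) := by
    have h := WeakDual.isCompact_closedBall (𝕜 := ℝ) (E := X) 0 1
    convert h using 1
    ext f
    simp [dualBall, dnorm, Metric.mem_closedBall, dist_zero_right]
  have hballΩ : ∃ b > 0, ∀ A : Set (WeakDual ℝ X), IsCompact A → ∀ l : ℝ, 0 < l →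
      etaOmega η (A + l • dualBall X) ≤ etaOmega η A + l * b := by
    refine ⟨etaOmega η (dualBall X) + 1,
      by have := etaOmega_nonneg η (dualBall X); linarith, ?_⟩
    intro A hA l hl
    have h1 : IsCompact (l • dualBall X) := hballcomp.smul l
    have h2 := hsubaddΩ A (l • dualBall X) hA h1
    have h3 := hhomogΩ l (dualBall X) hballcomp
    rw [abs_of_pos hl] at h3
    nlinarith [etaOmega_nonneg η (dualBall X)]
  exact ⟨⟨fun A _ => etaOmega_nonneg η A, hsingΩ, hmonoΩ, hunionΩ, hballΩ⟩,
    ⟨hhomogΩ, hsubaddΩ⟩⟩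

end Szlenk
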